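/- arXiv:2008.01824 — 2 statements merged into one kernel-verified Lean document; each statement's English description precedes it below -/
import Mathlib

section
/- Let X = {x, y, z} and U = {u, v, w} be the bases of two distinct 3-maximal submonoids of Σ*, and let g, h : A* → Σ* be the morphisms with g(𝐚) = x, g(𝐛) = y, g(𝐜) = z and h(𝐚) = u, h(𝐛) = v, h(𝐜) = w, and assume g is marked. Let (r, s) and (r', s') be two distinct minimal solutions, let 𝐮 be the longest common prefix of r and r', and let 𝐯 be the longest common prefix of s and s'. Then: (1) h(𝐯) is a prefix of g(𝐮), so there is a word o with g(𝐮) = h(𝐯)·o; (2) if 𝐮 = ε then 𝐯 = ε; and (3) writing r = 𝐮𝐮₁, r' = 𝐮𝐮₂, s = 𝐯𝐯₁, s' = 𝐯𝐯₂, the words 𝐮₁, 𝐮₂, 𝐯₁, 𝐯₂ are nonempty, the first letters of 𝐮₁ and 𝐮₂ differ, and the first letters of 𝐯₁ and 𝐯₂ differ (i.e., o is a critical overflow on (𝐮, 𝐯)). -/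
/-- The basis of a submonoid `M` of the free monoid `Σ*`: `(M \ {ε}) \ (M \ {ε})²`. -/
def basisOf {α : Type*} (M : Submonoid (FreeMonoid α)) : Set (FreeMonoid α) :=
  ((M : Set (FreeMonoid α)) \ {1}) \
    {w | ∃ u ∈ (M : Set (FreeMonoid α)) \ {1}, ∃ v ∈ (M : Set (FreeMonoid α)) \ {1}, w = u * v}

/-- A submonoid of `Σ*` is `k`-maximal if its rank (cardinality of its basis) is at most `k`
and it is maximal (w.r.t. inclusion) among submonoids of rank at most `k`. -/
def IsKMaximal {α : Type*} (k : ℕ) (M : Submonoid (FreeMonoid α)) : Prop :=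
  (basisOf M).Finite ∧ (basisOf M).ncard ≤ k ∧
    ∀ M' : Submonoid (FreeMonoid α),
      (basisOf M').Finite → (basisOf M').ncard ≤ k → M ≤ M' → M = M'

/-- A solution of the pair of morphisms `(g, h)`: a pair `(r, s)` of nonempty words
over the three-letter alphabet with `g r = h s` (an element of the coincidence set). -/
def IsSolution {α : Type*} (g h : FreeMonoid (Fin 3) →* FreeMonoid α)
    (p : FreeMonoid (Fin 3) × FreeMonoid (Fin 3)) : Prop :=
  p.1 ≠ 1 ∧ p.2 ≠ 1 ∧ g p.1 = h p.2

/-- `(p.1, p.2) < (q.1, q.2)`: componentwise proper prefix of pairs of words. -/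
def PairLt (p q : FreeMonoid (Fin 3) × FreeMonoid (Fin 3)) : Prop :=
  (∃ z : FreeMonoid (Fin 3), z ≠ 1 ∧ q.1 = p.1 * z) ∧
  (∃ z : FreeMonoid (Fin 3), z ≠ 1 ∧ q.2 = p.2 * z)

/-- A minimal solution: a solution having no proper (pairwise) prefix which is a solution. -/
def IsMinimalSolution {α : Type*} (g h : FreeMonoid (Fin 3) →* FreeMonoid α)
    (p : FreeMonoid (Fin 3) × FreeMonoid (Fin 3)) : Prop :=
  IsSolution g h p ∧ ∀ q, PairLt q p → ¬ IsSolution g h q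

/-- A morphism is marked if the images of distinct letters are nonempty words
beginning with distinct letters. -/
def Marked {α : Type*} (g : FreeMonoid (Fin 3) →* FreeMonoid α) : Prop :=
  (∀ i : Fin 3, g (FreeMonoid.of i) ≠ 1) ∧
    ∀ i j : Fin 3, i ≠ j →
      (FreeMonoid.toList (g (FreeMonoid.of i))).head? ≠
        (FreeMonoid.toList (g (FreeMonoid.of j))).head?

/-! ### Auxiliary lemmas -/

section AuxLemmas
variable {α : Type*}

lemma fm_pfx_iff (p q : FreeMonoid α) :
    (∃ t, q = p * t) ↔ FreeMonoid.toList p <+: FreeMonoid.toList q := by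
  constructor
  · rintro ⟨t, rfl⟩; exact ⟨FreeMonoid.toList t, rfl⟩
  · rintro ⟨l, hl⟩
    refine ⟨FreeMonoid.ofList l, FreeMonoid.toList.injective ?_⟩
    simpa using hl.symm

lemma fm_eq_one_iff (p : FreeMonoid α) : p = 1 ↔ FreeMonoid.toList p = [] := by
  constructor
  · rintro rfl; rfl
  · intro h; exact FreeMonoid.toList.injective (by simpa using h)

lemma head?_of_prefix {β : Type*} {l₁ l : List β} (h : l₁ <+: l) (hne : l₁ ≠ []) :
    l.head? = l₁.head? := by
  obtain ⟨t, rfl⟩ := h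
  cases l₁ with
  | nil => exact absurd rfl hne
  | cons a l' => simp

/-- prefix-lifting lemma for morphisms whose letter images are nonempty
and "prefix-synchronizing". -/
lemma prefix_lift (f : FreeMonoid (Fin 3) →* FreeMonoid α)
    (hne : ∀ i : Fin 3, f (FreeMonoid.of i) ≠ 1)
    (hkey : ∀ i j : Fin 3, ∀ l : List α,
      FreeMonoid.toList (f (FreeMonoid.of i)) <+: l →
      FreeMonoid.toList (f (FreeMonoid.of j)) <+: l → i = j)
    (p q : FreeMonoid (Fin 3)) (hpq : ∃ t, f q = f p * t) : ∃ t, q = p * t := by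
  rw [fm_pfx_iff] at hpq ⊢
  induction p using FreeMonoid.inductionOn' generalizing q with
  | one => simp
  | of_mul i p' ih =>
    have hfp : f (FreeMonoid.of i * p') = f (FreeMonoid.of i) * f p' := map_mul f _ _
    cases q using FreeMonoid.casesOn with
    | one =>
      exfalso
      rw [map_one] at hpq
      simp only [FreeMonoid.toList_one] at hpq
      have h0 : FreeMonoid.toList (f (FreeMonoid.of i * p')) = [] :=
        List.prefix_nil.mp hpq
      rw [hfp, FreeMonoid.toList_mul, List.append_eq_nil_iff] at h0
      exact hne i ((fm_eq_one_iff _).mpr h0.1)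
    | of_mul j q' =>
      have hfq : f (FreeMonoid.of j * q') = f (FreeMonoid.of j) * f q' := map_mul f _ _
      have hi : FreeMonoid.toList (f (FreeMonoid.of i)) <+:
          FreeMonoid.toList (f (FreeMonoid.of j * q')) := by
        refine List.IsPrefix.trans ?_ hpq
        rw [hfp, FreeMonoid.toList_mul]
        exact List.prefix_append _ _
      have hj : FreeMonoid.toList (f (FreeMonoid.of j)) <+:
          FreeMonoid.toList (f (FreeMonoid.of j * q')) := by
        rw [hfq, FreeMonoid.toList_mul]
        exact List.prefix_append _ _
      have hij : i = j := hkey i j _ hi hj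
      subst hij
      have hcanc : FreeMonoid.toList (f p') <+: FreeMonoid.toList (f q') := by
        rw [hfp, hfq] at hpq
        simp only [FreeMonoid.toList_mul] at hpq
        exact (List.prefix_append_right_inj _).mp hpq
      have := ih q' hcanc
      simp only [FreeMonoid.toList_mul, FreeMonoid.toList_of]
      exact List.cons_prefix_cons.mpr ⟨rfl, this⟩

lemma inj_of_prefix_lift (f : FreeMonoid (Fin 3) →* FreeMonoid α)
    (hpl : ∀ p q : FreeMonoid (Fin 3), (∃ t, f q = f p * t) → ∃ t, q = p * t)
    {p q : FreeMonoid (Fin 3)} (h : f p = f q) : p = q := by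
  have h1 : FreeMonoid.toList p <+: FreeMonoid.toList q :=
    (fm_pfx_iff p q).mp (hpl p q ⟨1, by rw [h, mul_one]⟩)
  have h2 : FreeMonoid.toList q <+: FreeMonoid.toList p :=
    (fm_pfx_iff q p).mp (hpl q p ⟨1, by rw [h, mul_one]⟩)
  exact FreeMonoid.toList.injective (h1.eq_of_length_le h2.length_le)

lemma ne_one_of_mem_basisOf {M : Submonoid (FreeMonoid α)} {m : FreeMonoid α}
    (h : m ∈ basisOf M) : m ≠ 1 := h.1.2

lemma basisOf_closure_subset (S : Set (FreeMonoid α)) :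
    basisOf (Submonoid.closure S) ⊆ S := by
  rintro m ⟨⟨hmem, hne⟩, hirr⟩
  obtain ⟨l, hl, hprod⟩ := Submonoid.exists_list_of_mem_closure hmem
  have key : ∀ l : List (FreeMonoid α), (∀ y ∈ l, y ∈ S) → l.prod ≠ 1 →
      l.prod ∈ S ∨ ∃ a ∈ (Submonoid.closure S : Set (FreeMonoid α)) \ {1},
        ∃ b ∈ (Submonoid.closure S : Set (FreeMonoid α)) \ {1}, l.prod = a * b := by
    intro l
    induction l with
    | nil => intro _ hne1; exact absurd List.prod_nil hne1
    | cons a t ih =>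
      intro hmem' hne1
      rw [List.prod_cons] at hne1 ⊢
      by_cases ha : a = 1
      · subst ha
        rw [one_mul] at hne1 ⊢
        exact ih (fun y hy => hmem' y (List.mem_cons_of_mem _ hy)) hne1
      · by_cases htp : t.prod = 1
        · left; rw [htp, mul_one]; exact hmem' a List.mem_cons_self
        · right
          refine ⟨a, ⟨Submonoid.subset_closure (hmem' a List.mem_cons_self), ha⟩,
            t.prod, ⟨?_, htp⟩, rfl⟩
          exact list_prod_mem
            (fun y hy => Submonoid.subset_closure (hmem' y (List.mem_cons_of_mem _ hy)))
  rcases key l hl (hprod ▸ hne) with h1 | h2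
  · exact hprod ▸ h1
  · exact absurd (hprod ▸ h2) hirr

lemma ncard_triple_le (a b c : FreeMonoid α) : ({a, b, c} : Set (FreeMonoid α)).ncard ≤ 3 := by
  have h1 : ({a, b, c} : Set (FreeMonoid α)).ncard ≤ ({b, c} : Set (FreeMonoid α)).ncard + 1 :=
    Set.ncard_insert_le _ _
  have h2 : ({b, c} : Set (FreeMonoid α)).ncard ≤ ({c} : Set (FreeMonoid α)).ncard + 1 :=
    Set.ncard_insert_le _ _
  have h3 : ({c} : Set (FreeMonoid α)).ncard = 1 := Set.ncard_singleton _
  omega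

lemma distinct_of_ncard3 {a b c : FreeMonoid α} (h : ({a, b, c} : Set (FreeMonoid α)).ncard = 3) :
    a ≠ b ∧ a ≠ c ∧ b ≠ c := by
  refine ⟨?_, ?_, ?_⟩ <;> rintro rfl
  · have he : ({a, a, c} : Set (FreeMonoid α)) = {a, c} := by
      ext m; simp [Set.mem_insert_iff]; try tauto
    rw [he] at h
    have h1 : ({a, c} : Set (FreeMonoid α)).ncard ≤ 2 := by
      have := Set.ncard_insert_le a ({c} : Set (FreeMonoid α))
      have := Set.ncard_singleton (a := c)
      omega
    omega
  · have he : ({a, b, a} : Set (FreeMonoid α)) = {a, b} := by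
      ext m; simp [Set.mem_insert_iff]; try tauto
    rw [he] at h
    have h1 : ({a, b} : Set (FreeMonoid α)).ncard ≤ 2 := by
      have := Set.ncard_insert_le a ({b} : Set (FreeMonoid α))
      have := Set.ncard_singleton (a := b)
      omega
    omega
  · have he : ({a, b, b} : Set (FreeMonoid α)) = {a, b} := by
      ext m; simp [Set.mem_insert_iff]; try tauto
    rw [he] at h
    have h1 : ({a, b} : Set (FreeMonoid α)).ncard ≤ 2 := by
      have := Set.ncard_insert_le a ({b} : Set (FreeMonoid α))
      have := Set.ncard_singleton (a := b)
      omega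
    omega

/-- Core 3-maximality argument: no basis element of a 3-maximal submonoid with
3-element basis is a proper prefix of another one. -/
lemma core_nonprefix (u v w : FreeMonoid α)
    (hUbasis : basisOf (Submonoid.closure {u, v, w}) = {u, v, w})
    (hUmax : IsKMaximal 3 (Submonoid.closure ({u, v, w} : Set (FreeMonoid α))))
    (p q c t : FreeMonoid α) (hset : ({u, v, w} : Set (FreeMonoid α)) = {p, q, c})
    (hp1 : p ≠ 1) (hqp : q ≠ p) (hqc : q ≠ c)
    (ht : t ≠ 1) (heq : q = p * t) : False := by
  have hcl : Submonoid.closure ({u, v, w} : Set (FreeMonoid α)) ≤ Submonoid.closure {p, t, c} := by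
    rw [hset]
    refine Submonoid.closure_le.2 ?_
    intro m hmem
    simp only [Set.mem_insert_iff, Set.mem_singleton_iff] at hmem
    rcases hmem with rfl | rfl | rfl
    · exact Submonoid.subset_closure (by simp)
    · rw [heq]
      exact mul_mem (Submonoid.subset_closure (by simp)) (Submonoid.subset_closure (by simp))
    · exact Submonoid.subset_closure (by simp)
  have hsub := basisOf_closure_subset ({p, t, c} : Set (FreeMonoid α))
  have hfin3 : ({p, t, c} : Set (FreeMonoid α)).Finite :=
    (((Set.finite_singleton c).insert t).insert p)
  have hfin : (basisOf (Submonoid.closure ({p, t, c} : Set (FreeMonoid α)))).Finite :=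
    hfin3.subset hsub
  have hnc : (basisOf (Submonoid.closure ({p, t, c} : Set (FreeMonoid α)))).ncard ≤ 3 :=
    le_trans (Set.ncard_le_ncard hsub hfin3) (ncard_triple_le p t c)
  have heqM := hUmax.2.2 _ hfin hnc hcl
  have hq_basis : q ∈ basisOf (Submonoid.closure ({u, v, w} : Set (FreeMonoid α))) := by
    rw [hUbasis, hset]; simp
  rw [heqM] at hq_basis
  have hq_mem := hsub hq_basis
  simp only [Set.mem_insert_iff, Set.mem_singleton_iff] at hq_mem
  rcases hq_mem with rfl | rfl | rfl
  · exact hqp rfl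
  · have : (1 : FreeMonoid α) * q = p * q := by rw [one_mul]; exact heq
    exact hp1 (mul_right_cancel this).symm
  · exact hqc rfl

/-- If `s` is a (not necessarily proper) prefix of `s'` for two distinct minimal
solutions `(r,s)`, `(r',s')`, we get a contradiction. -/
lemma no_pfx (g h : FreeMonoid (Fin 3) →* FreeMonoid α)
    (hg_pfx : ∀ p q : FreeMonoid (Fin 3), (∃ t, g q = g p * t) → ∃ t, q = p * t)
    (hh_pfx : ∀ p q : FreeMonoid (Fin 3), (∃ t, h q = h p * t) → ∃ t, q = p * t)
    (r s r' s' : FreeMonoid (Fin 3))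
    (h1 : IsMinimalSolution g h (r, s)) (h2 : IsMinimalSolution g h (r', s'))
    (hne : (r, s) ≠ (r', s')) (hp : ∃ t, s' = s * t) : False := by
  obtain ⟨t, hst⟩ := hp
  have hGH : g r = h s := h1.1.2.2
  have hGH' : g r' = h s' := h2.1.2.2
  have hgr : ∃ t', g r' = g r * t' := ⟨h t, by rw [hGH', hst, map_mul, hGH]⟩
  obtain ⟨t'', hrt⟩ := hg_pfx r r' hgr
  by_cases ht'' : t'' = 1
  · rw [ht'', mul_one] at hrt
    have hss : s = s' := inj_of_prefix_lift h hh_pfx (by rw [← hGH, ← hGH', hrt])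
    exact hne (by rw [hrt, hss])
  · by_cases ht : t = 1
    · rw [ht, mul_one] at hst
      have hrr : r = r' := inj_of_prefix_lift g hg_pfx (by rw [hGH, hGH', hst])
      exact ht'' ((mul_left_cancel (a := r) (by rw [← hrt, mul_one, hrr])).symm)
    · exact h2.2 (r, s) ⟨⟨t'', ht'', hrt⟩, ⟨t, ht, hst⟩⟩ h1.1

end AuxLemmas

/-- Two distinct minimal solutions produce a critical overflow on the pair of longest
common prefixes of their components. -/
theorem critical_overflow_of_two_minimal_solutions {α : Type*}
    (x y z u v w : FreeMonoid α)
    (hXcard : ({x, y, z} : Set (FreeMonoid α)).ncard = 3)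
    (hUcard : ({u, v, w} : Set (FreeMonoid α)).ncard = 3)
    (hXU : ({x, y, z} : Set (FreeMonoid α)) ≠ {u, v, w})
    (hXbasis : basisOf (Submonoid.closure {x, y, z}) = {x, y, z})
    (hUbasis : basisOf (Submonoid.closure {u, v, w}) = {u, v, w})
    (hXmax : IsKMaximal 3 (Submonoid.closure ({x, y, z} : Set (FreeMonoid α))))
    (hUmax : IsKMaximal 3 (Submonoid.closure ({u, v, w} : Set (FreeMonoid α))))
    (g h : FreeMonoid (Fin 3) →* FreeMonoid α)
    (hga : g (FreeMonoid.of 0) = x) (hgb : g (FreeMonoid.of 1) = y)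
    (hgc : g (FreeMonoid.of 2) = z)
    (hha : h (FreeMonoid.of 0) = u) (hhb : h (FreeMonoid.of 1) = v)
    (hhc : h (FreeMonoid.of 2) = w)
    (hm : Marked g)
    (r s r' s' : FreeMonoid (Fin 3))
    (hrs : IsMinimalSolution g h (r, s)) (hrs' : IsMinimalSolution g h (r', s'))
    (hne : (r, s) ≠ (r', s'))
    -- `U` is the longest common prefix of `r` and `r'`:
    (U : FreeMonoid (Fin 3))
    (hU1 : ∃ t, r = U * t) (hU2 : ∃ t, r' = U * t)
    (hUmaxpref : ∀ W : FreeMonoid (Fin 3), (∃ t, r = W * t) → (∃ t, r' = W * t) → ∃ t, U = W * t)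
    -- `V` is the longest common prefix of `s` and `s'`:
    (V : FreeMonoid (Fin 3))
    (hV1 : ∃ t, s = V * t) (hV2 : ∃ t, s' = V * t)
    (hVmaxpref : ∀ W : FreeMonoid (Fin 3), (∃ t, s = W * t) → (∃ t, s' = W * t) → ∃ t, V = W * t) :
    (∃ o : FreeMonoid α, g U = h V * o) ∧
    (U = 1 → V = 1) ∧
    (∀ u₁ u₂ v₁ v₂ : FreeMonoid (Fin 3),
      r = U * u₁ → r' = U * u₂ → s = V * v₁ → s' = V * v₂ →
        u₁ ≠ 1 ∧ u₂ ≠ 1 ∧ v₁ ≠ 1 ∧ v₂ ≠ 1 ∧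
        (FreeMonoid.toList u₁).head? ≠ (FreeMonoid.toList u₂).head? ∧
        (FreeMonoid.toList v₁).head? ≠ (FreeMonoid.toList v₂).head?) := by
  classical
  obtain ⟨hd1, hd2, hd3⟩ := distinct_of_ncard3 hUcard
  have hu1 : u ≠ 1 := ne_one_of_mem_basisOf (M := Submonoid.closure {u, v, w})
    (by rw [hUbasis]; simp)
  have hv1 : v ≠ 1 := ne_one_of_mem_basisOf (M := Submonoid.closure {u, v, w})
    (by rw [hUbasis]; simp)
  have hw1 : w ≠ 1 := ne_one_of_mem_basisOf (M := Submonoid.closure {u, v, w})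
    (by rw [hUbasis]; simp)
  -- `h` has nonempty letter images
  have hne1h : ∀ i : Fin 3, h (FreeMonoid.of i) ≠ 1 := by
    intro i
    fin_cases i
    · show h (FreeMonoid.of 0) ≠ 1
      rw [hha]; exact hu1
    · show h (FreeMonoid.of 1) ≠ 1
      rw [hhb]; exact hv1
    · show h (FreeMonoid.of 2) ≠ 1
      rw [hhc]; exact hw1
  -- no image of a letter under `h` is a prefix of the image of a different letter
  have hnonpfx : ∀ i j : Fin 3, i ≠ j → ¬∃ t, h (FreeMonoid.of j) = h (FreeMonoid.of i) * t := by
    intro i j hij hex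
    obtain ⟨t, heq⟩ := hex
    by_cases ht : t = 1
    · rw [ht, mul_one] at heq
      fin_cases i <;> fin_cases j
      · exact hij rfl
      · replace heq : h (FreeMonoid.of 1) = h (FreeMonoid.of 0) := heq
        rw [hha, hhb] at heq
        exact hd1 heq.symm
      · replace heq : h (FreeMonoid.of 2) = h (FreeMonoid.of 0) := heq
        rw [hha, hhc] at heq
        exact hd2 heq.symm
      · replace heq : h (FreeMonoid.of 0) = h (FreeMonoid.of 1) := heq
        rw [hha, hhb] at heq
        exact hd1 heq
      · exact hij rfl
      · replace heq : h (FreeMonoid.of 2) = h (FreeMonoid.of 1) := heq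
        rw [hhb, hhc] at heq
        exact hd3 heq.symm
      · replace heq : h (FreeMonoid.of 0) = h (FreeMonoid.of 2) := heq
        rw [hha, hhc] at heq
        exact hd2 heq
      · replace heq : h (FreeMonoid.of 1) = h (FreeMonoid.of 2) := heq
        rw [hhb, hhc] at heq
        exact hd3 heq
      · exact hij rfl
    · fin_cases i <;> fin_cases j
      · exact hij rfl
      · replace heq : h (FreeMonoid.of 1) = h (FreeMonoid.of 0) * t := heq
        rw [hha, hhb] at heq
        exact core_nonprefix u v w hUbasis hUmax u v w t rfl hu1 hd1.symm hd3 ht heq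
      · replace heq : h (FreeMonoid.of 2) = h (FreeMonoid.of 0) * t := heq
        rw [hha, hhc] at heq
        exact core_nonprefix u v w hUbasis hUmax u w v t
          (by ext m; simp [Set.mem_insert_iff]; try tauto) hu1 hd2.symm hd3.symm ht heq
      · replace heq : h (FreeMonoid.of 0) = h (FreeMonoid.of 1) * t := heq
        rw [hhb, hha] at heq
        exact core_nonprefix u v w hUbasis hUmax v u w t
          (by ext m; simp [Set.mem_insert_iff]; try tauto) hv1 hd1 hd2 ht heq
      · exact hij rfl
      · replace heq : h (FreeMonoid.of 2) = h (FreeMonoid.of 1) * t := heq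
        rw [hhb, hhc] at heq
        exact core_nonprefix u v w hUbasis hUmax v w u t
          (by ext m; simp [Set.mem_insert_iff]; try tauto) hv1 hd3.symm hd2.symm ht heq
      · replace heq : h (FreeMonoid.of 0) = h (FreeMonoid.of 2) * t := heq
        rw [hhc, hha] at heq
        exact core_nonprefix u v w hUbasis hUmax w u v t
          (by ext m; simp [Set.mem_insert_iff]; try tauto) hw1 hd2 hd1 ht heq
      · replace heq : h (FreeMonoid.of 1) = h (FreeMonoid.of 2) * t := heq
        rw [hhc, hhb] at heq
        exact core_nonprefix u v w hUbasis hUmax w v u t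
          (by ext m; simp [Set.mem_insert_iff]; try tauto) hw1 hd3 hd1.symm ht heq
      · exact hij rfl
  have hkey_h : ∀ i j : Fin 3, ∀ l : List α,
      FreeMonoid.toList (h (FreeMonoid.of i)) <+: l →
      FreeMonoid.toList (h (FreeMonoid.of j)) <+: l → i = j := by
    intro i j l hi hj
    by_contra hij
    rcases List.prefix_or_prefix_of_prefix hi hj with hc | hc
    · exact hnonpfx i j hij ((fm_pfx_iff _ _).mpr hc)
    · exact hnonpfx j i (Ne.symm hij) ((fm_pfx_iff _ _).mpr hc)
  have hpfx_h := prefix_lift h hne1h hkey_h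
  -- `g` side (marked)
  have hkey_g : ∀ i j : Fin 3, ∀ l : List α,
      FreeMonoid.toList (g (FreeMonoid.of i)) <+: l →
      FreeMonoid.toList (g (FreeMonoid.of j)) <+: l → i = j := by
    intro i j l hi hj
    by_contra hij
    apply hm.2 i j hij
    have hne_i : FreeMonoid.toList (g (FreeMonoid.of i)) ≠ [] :=
      fun hnil => hm.1 i ((fm_eq_one_iff _).mpr hnil)
    have hne_j : FreeMonoid.toList (g (FreeMonoid.of j)) ≠ [] :=
      fun hnil => hm.1 j ((fm_eq_one_iff _).mpr hnil)
    rw [← head?_of_prefix hi hne_i, ← head?_of_prefix hj hne_j]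
  have hpfx_g := prefix_lift g hm.1 hkey_g
  -- incomparability facts
  have hsnp : ¬∃ t, s' = s * t :=
    fun hp => no_pfx g h hpfx_g hpfx_h r s r' s' hrs hrs' hne hp
  have hsnp' : ¬∃ t, s = s' * t :=
    fun hp => no_pfx g h hpfx_g hpfx_h r' s' r s hrs' hrs (Ne.symm hne) hp
  have hGH : g r = h s := hrs.1.2.2
  have hGH' : g r' = h s' := hrs'.1.2.2
  have hrnp : ¬∃ t, r' = r * t := by
    rintro ⟨t, htr⟩
    exact hsnp (hpfx_h s s' ⟨g t, by rw [← hGH', htr, map_mul, hGH]⟩)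
  have hrnp' : ¬∃ t, r = r' * t := by
    rintro ⟨t, htr⟩
    exact hsnp' (hpfx_h s' s ⟨g t, by rw [← hGH, htr, map_mul, hGH']⟩)
  -- part (3)
  have key3 : ∀ u₁ u₂ v₁ v₂ : FreeMonoid (Fin 3),
      r = U * u₁ → r' = U * u₂ → s = V * v₁ → s' = V * v₂ →
        u₁ ≠ 1 ∧ u₂ ≠ 1 ∧ v₁ ≠ 1 ∧ v₂ ≠ 1 ∧
        (FreeMonoid.toList u₁).head? ≠ (FreeMonoid.toList u₂).head? ∧
        (FreeMonoid.toList v₁).head? ≠ (FreeMonoid.toList v₂).head? := by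
    intro u₁ u₂ v₁ v₂ hr1 hr2 hs1 hs2
    have hu1ne : u₁ ≠ 1 := by
      rintro rfl
      rw [mul_one] at hr1
      exact hrnp ⟨u₂, by rw [hr2, ← hr1]⟩
    have hu2ne : u₂ ≠ 1 := by
      rintro rfl
      rw [mul_one] at hr2
      exact hrnp' ⟨u₁, by rw [hr1, ← hr2]⟩
    have hv1ne : v₁ ≠ 1 := by
      rintro rfl
      rw [mul_one] at hs1
      exact hsnp ⟨v₂, by rw [hs2, ← hs1]⟩
    have hv2ne : v₂ ≠ 1 := by
      rintro rfl
      rw [mul_one] at hs2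
      exact hsnp' ⟨v₁, by rw [hs1, ← hs2]⟩
    refine ⟨hu1ne, hu2ne, hv1ne, hv2ne, ?_, ?_⟩
    · intro hh
      obtain ⟨a, l₁, hl₁⟩ := List.exists_cons_of_ne_nil
        (fun hnil => hu1ne ((fm_eq_one_iff u₁).mpr hnil))
      obtain ⟨b, l₂, hl₂⟩ := List.exists_cons_of_ne_nil
        (fun hnil => hu2ne ((fm_eq_one_iff u₂).mpr hnil))
      have hab : a = b := by rw [hl₁, hl₂] at hh; simpa using hh
      subst hab
      have hdec1 : u₁ = FreeMonoid.of a * FreeMonoid.ofList l₁ :=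
        FreeMonoid.toList.injective (by simpa using hl₁)
      have hdec2 : u₂ = FreeMonoid.of a * FreeMonoid.ofList l₂ :=
        FreeMonoid.toList.injective (by simpa using hl₂)
      obtain ⟨t, htU⟩ := hUmaxpref (U * FreeMonoid.of a)
        ⟨FreeMonoid.ofList l₁, by rw [hr1, hdec1, mul_assoc]⟩
        ⟨FreeMonoid.ofList l₂, by rw [hr2, hdec2, mul_assoc]⟩
      have hlen := congrArg (fun m => (FreeMonoid.toList m).length) htU
      simp only [FreeMonoid.toList_mul, FreeMonoid.toList_of, List.length_append,
        List.length_cons, List.length_nil] at hlen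
      omega
    · intro hh
      obtain ⟨a, l₁, hl₁⟩ := List.exists_cons_of_ne_nil
        (fun hnil => hv1ne ((fm_eq_one_iff v₁).mpr hnil))
      obtain ⟨b, l₂, hl₂⟩ := List.exists_cons_of_ne_nil
        (fun hnil => hv2ne ((fm_eq_one_iff v₂).mpr hnil))
      have hab : a = b := by rw [hl₁, hl₂] at hh; simpa using hh
      subst hab
      have hdec1 : v₁ = FreeMonoid.of a * FreeMonoid.ofList l₁ :=
        FreeMonoid.toList.injective (by simpa using hl₁)
      have hdec2 : v₂ = FreeMonoid.of a * FreeMonoid.ofList l₂ :=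
        FreeMonoid.toList.injective (by simpa using hl₂)
      obtain ⟨t, htV⟩ := hVmaxpref (V * FreeMonoid.of a)
        ⟨FreeMonoid.ofList l₁, by rw [hs1, hdec1, mul_assoc]⟩
        ⟨FreeMonoid.ofList l₂, by rw [hs2, hdec2, mul_assoc]⟩
      have hlen := congrArg (fun m => (FreeMonoid.toList m).length) htV
      simp only [FreeMonoid.toList_mul, FreeMonoid.toList_of, List.length_append,
        List.length_cons, List.length_nil] at hlen
      omega
  -- part (1)
  obtain ⟨u₁, hr1⟩ := hU1
  obtain ⟨u₂, hr2⟩ := hU2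
  obtain ⟨v₁, hs1⟩ := hV1
  obtain ⟨v₂, hs2⟩ := hV2
  obtain ⟨hu1ne, hu2ne, hv1ne, hv2ne, hhu, hhv⟩ := key3 u₁ u₂ v₁ v₂ hr1 hr2 hs1 hs2
  have hVr : FreeMonoid.toList (h V) <+: FreeMonoid.toList (g r) := by
    rw [hGH, hs1, map_mul, FreeMonoid.toList_mul]
    exact List.prefix_append _ _
  have hVr' : FreeMonoid.toList (h V) <+: FreeMonoid.toList (g r') := by
    rw [hGH', hs2, map_mul, FreeMonoid.toList_mul]
    exact List.prefix_append _ _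
  have hUr : FreeMonoid.toList (g U) <+: FreeMonoid.toList (g r) := by
    rw [hr1, map_mul, FreeMonoid.toList_mul]
    exact List.prefix_append _ _
  have part1 : ∃ o : FreeMonoid α, g U = h V * o := by
    rcases List.prefix_or_prefix_of_prefix hVr hUr with hc | hc
    · exact (fm_pfx_iff _ _).mpr hc
    · obtain ⟨ml, hml⟩ := hc
      by_cases hml0 : ml = []
      · refine ⟨1, FreeMonoid.toList.injective ?_⟩
        subst hml0
        simp [← hml]
      · exfalso
        obtain ⟨e, ml', rfl⟩ := List.exists_cons_of_ne_nil hml0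
        have hm1 : (e :: ml') <+: FreeMonoid.toList (g u₁) := by
          have h' : FreeMonoid.toList (g U) ++ (e :: ml') <+:
              FreeMonoid.toList (g U) ++ FreeMonoid.toList (g u₁) := by
            rw [hml]
            have := hVr
            rw [hr1, map_mul, FreeMonoid.toList_mul] at this
            exact this
          exact (List.prefix_append_right_inj _).mp h'
        have hm2 : (e :: ml') <+: FreeMonoid.toList (g u₂) := by
          have h' : FreeMonoid.toList (g U) ++ (e :: ml') <+:
              FreeMonoid.toList (g U) ++ FreeMonoid.toList (g u₂) := by
            rw [hml]
            have := hVr'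
            rw [hr2, map_mul, FreeMonoid.toList_mul] at this
            exact this
          exact (List.prefix_append_right_inj _).mp h'
        -- heads of `g u₁`, `g u₂`
        obtain ⟨a₁, l₁, hl₁⟩ := List.exists_cons_of_ne_nil
          (fun hnil => hu1ne ((fm_eq_one_iff u₁).mpr hnil))
        obtain ⟨a₂, l₂, hl₂⟩ := List.exists_cons_of_ne_nil
          (fun hnil => hu2ne ((fm_eq_one_iff u₂).mpr hnil))
        have ha12 : a₁ ≠ a₂ := by
          intro hEq
          rw [hl₁, hl₂, hEq] at hhu
          exact hhu rfl
        have hdec1 : u₁ = FreeMonoid.of a₁ * FreeMonoid.ofList l₁ :=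
          FreeMonoid.toList.injective (by simpa using hl₁)
        have hdec2 : u₂ = FreeMonoid.of a₂ * FreeMonoid.ofList l₂ :=
          FreeMonoid.toList.injective (by simpa using hl₂)
        have hgne1 : FreeMonoid.toList (g (FreeMonoid.of a₁)) ≠ [] :=
          fun hnil => hm.1 a₁ ((fm_eq_one_iff _).mpr hnil)
        have hgne2 : FreeMonoid.toList (g (FreeMonoid.of a₂)) ≠ [] :=
          fun hnil => hm.1 a₂ ((fm_eq_one_iff _).mpr hnil)
        have hh1 : (FreeMonoid.toList (g u₁)).head? =
            (FreeMonoid.toList (g (FreeMonoid.of a₁))).head? := by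
          rw [hdec1, map_mul, FreeMonoid.toList_mul]
          exact head?_of_prefix (List.prefix_append _ _) hgne1
        have hh2 : (FreeMonoid.toList (g u₂)).head? =
            (FreeMonoid.toList (g (FreeMonoid.of a₂))).head? := by
          rw [hdec2, map_mul, FreeMonoid.toList_mul]
          exact head?_of_prefix (List.prefix_append _ _) hgne2
        have he1 : (FreeMonoid.toList (g u₁)).head? = some e :=
          by rw [head?_of_prefix hm1 (List.cons_ne_nil _ _)]; rfl
        have he2 : (FreeMonoid.toList (g u₂)).head? = some e :=
          by rw [head?_of_prefix hm2 (List.cons_ne_nil _ _)]; rfl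
        exact hm.2 a₁ a₂ ha12 (by rw [← hh1, ← hh2, he1, he2])
  refine ⟨part1, ?_, key3⟩
  intro hUone
  obtain ⟨o, ho⟩ := part1
  rw [hUone, map_one] at ho
  have hhV : h V = 1 := by
    have := congrArg FreeMonoid.toList ho
    simp only [FreeMonoid.toList_one, FreeMonoid.toList_mul] at this
    rcases List.append_eq_nil_iff.mp this.symm with ⟨hv, _⟩
    exact (fm_eq_one_iff _).mpr hv
  have : h V = h 1 := by rw [hhV, map_one]
  exact inj_of_prefix_lift h hpfx_h this
end

section
/- Every element of the basis of a k-maximal submonoid of Σ* is a primitive word. -/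
/-- A nonempty word is primitive if it is not a proper power: `w = vⁿ` implies `n = 1`. -/
def Primitive {α : Type*} (w : FreeMonoid α) : Prop :=
  w ≠ 1 ∧ ∀ (v : FreeMonoid α) (n : ℕ), w = v ^ n → n = 1

lemma fm_mul_eq_one {α : Type*} {a b : FreeMonoid α} (h : a * b = 1) : a = 1 ∧ b = 1 := by
  have h1 := congrArg FreeMonoid.length h
  simp [FreeMonoid.length_mul] at h1
  exact h1

lemma fm_pow_ne_one {α : Type*} {v : FreeMonoid α} (hv : v ≠ 1) {m : ℕ} (hm : 1 ≤ m) :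
    v ^ m ≠ 1 := by
  intro h
  induction m with
  | zero => omega
  | succ n ih =>
    rw [pow_succ] at h
    exact hv (fm_mul_eq_one h).2

/-- The basis generates. -/
lemma closure_basis {α : Type*} (M : Submonoid (FreeMonoid α)) :
    Submonoid.closure (basisOf M) = M := by
  apply le_antisymm
  · rw [Submonoid.closure_le]
    intro x hx
    exact hx.1.1
  · suffices h : ∀ n w, w ∈ M → FreeMonoid.length w = n → w ∈ Submonoid.closure (basisOf M) by
      intro w hw; exact h _ w hw rfl
    intro n
    induction n using Nat.strong_induction_on with
    | _ n ih =>
      intro w hw hq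
      subst hq
      by_cases h1 : w = 1
      · subst h1; exact one_mem _
      by_cases hb : w ∈ basisOf M
      · exact Submonoid.subset_closure hb
      · have : ∃ u ∈ (M : Set (FreeMonoid α)) \ {1},
            ∃ v ∈ (M : Set (FreeMonoid α)) \ {1}, w = u * v := by
          by_contra hc
          exact hb ⟨⟨hw, h1⟩, hc⟩
        obtain ⟨u, ⟨hu, hu1⟩, v, ⟨hv, hv1⟩, rfl⟩ := this
        have hul : 1 ≤ FreeMonoid.length u := by
          rcases Nat.eq_zero_or_pos (FreeMonoid.length u) with h | h
          · exact absurd (FreeMonoid.length_eq_zero.mp h) hu1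
          · exact h
        have hvl : 1 ≤ FreeMonoid.length v := by
          rcases Nat.eq_zero_or_pos (FreeMonoid.length v) with h | h
          · exact absurd (FreeMonoid.length_eq_zero.mp h) hv1
          · exact h
        have hlen := FreeMonoid.length_mul u v
        exact mul_mem (ih (FreeMonoid.length u) (by omega) u hu rfl)
          (ih (FreeMonoid.length v) (by omega) v hv rfl)


/-- The basis is contained in any generating set. -/
lemma basis_subset {α : Type*} (S : Set (FreeMonoid α)) :
    basisOf (Submonoid.closure S) ⊆ S := by
  intro w hw
  obtain ⟨⟨hwm, hw1⟩, hnd⟩ := hw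
  obtain ⟨l, hl, hprod⟩ := Submonoid.exists_list_of_mem_closure hwm
  clear hwm
  subst hprod
  induction l with
  | nil => exact absurd rfl hw1
  | cons a t ih =>
    simp only [List.prod_cons] at *
    have ha : a ∈ S := hl a List.mem_cons_self
    have htS : ∀ y ∈ t, y ∈ S := fun y hy => hl y (List.mem_cons_of_mem a hy)
    by_cases ha1 : a = 1
    · rw [ha1, one_mul] at hw1 hnd ⊢
      exact ih htS hnd hw1
    by_cases ht1 : t.prod = 1
    · rw [ht1, mul_one]
      exact ha
    · exfalso
      apply hnd
      refine ⟨a, ⟨Submonoid.subset_closure ha, ha1⟩, t.prod,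
        ⟨?_, ht1⟩, rfl⟩
      exact list_prod_mem (fun y hy => Submonoid.subset_closure (htS y hy))

/-- Every element of the basis of a `k`-maximal submonoid is a primitive word. -/
theorem basis_of_kMaximal_primitive {α : Type*} (k : ℕ) (M : Submonoid (FreeMonoid α))
    (hmax : IsKMaximal k M) :
    ∀ x ∈ basisOf M, Primitive x := by
  obtain ⟨hfin, hcard, hM⟩ := hmax
  intro x hx
  have hx1 : x ≠ 1 := hx.1.2
  refine ⟨hx1, fun v n hxv => ?_⟩
  by_contra hn1
  rcases Nat.eq_zero_or_pos n with hn0 | hnpos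
  · subst hn0; exact hx1 (by simpa using hxv)
  have hn2 : 2 ≤ n := by omega
  have hv1 : v ≠ 1 := by
    rintro rfl; exact hx1 (by simpa using hxv)
  -- the new submonoid
  set S : Set (FreeMonoid α) := (basisOf M \ {x}) ∪ {v} with hS
  set M' : Submonoid (FreeMonoid α) := Submonoid.closure (basisOf M ∪ {v}) with hM'
  have hxM' : x ∈ M' := by
    rw [hxv]
    exact pow_mem (Submonoid.subset_closure (show v ∈ basisOf M ∪ {v} from Or.inr rfl)) n
  have hvM' : v ∈ M' := Submonoid.subset_closure (show v ∈ basisOf M ∪ {v} from Or.inr rfl)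
  have hle : M ≤ M' := by
    conv_lhs => rw [← closure_basis M]
    exact Submonoid.closure_mono Set.subset_union_left
  -- x is not in the basis of M'
  have hxnb : x ∉ basisOf M' := by
    intro hxb
    apply hxb.2
    refine ⟨v, ⟨hvM', hv1⟩, v ^ (n - 1), ⟨pow_mem hvM' _,
      fm_pow_ne_one hv1 (by omega)⟩, ?_⟩
    rw [hxv, ← pow_succ']
    congr 1
    omega
  have hbsub : basisOf M' ⊆ S := by
    intro y hy
    have := basis_subset (basisOf M ∪ {v}) hy
    rcases this with h | h
    · rcases eq_or_ne y x with rfl | hne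
      · exact absurd hy hxnb
      · exact Or.inl ⟨h, hne⟩
    · exact Or.inr h
  have hSfin : S.Finite := hfin.diff.union (Set.finite_singleton v)
  have hfin' : (basisOf M').Finite := hSfin.subset hbsub
  have hcard' : (basisOf M').ncard ≤ k := by
    have h1 : (basisOf M').ncard ≤ S.ncard := Set.ncard_le_ncard hbsub hSfin
    have h2 : S.ncard ≤ (basisOf M \ {x}).ncard + 1 := by
      calc S.ncard ≤ (basisOf M \ {x}).ncard + ({v} : Set (FreeMonoid α)).ncard :=
            Set.ncard_union_le _ _
        _ = (basisOf M \ {x}).ncard + 1 := by rw [Set.ncard_singleton]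
    have h3 : (basisOf M \ {x}).ncard + 1 = (basisOf M).ncard :=
      Set.ncard_diff_singleton_add_one hx hfin
    omega
  have heq : M = M' := hM M' hfin' hcard' hle
  -- now v ∈ M, so x decomposes, contradiction
  have hvM : v ∈ M := heq ▸ hvM'
  apply hx.2
  refine ⟨v, ⟨hvM, hv1⟩, v ^ (n - 1), ⟨pow_mem hvM _,
    fm_pow_ne_one hv1 (by omega)⟩, ?_⟩
  rw [hxv, ← pow_succ']
  congr 1
  omega
end
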